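/- Let k, ℓ, r be integers with 2 ≤ ℓ ≤ k−1 and 0 ≤ r < ℓ/2. Let B be a set of k vertices, let Υ ⊆ B with |Υ| = ℓ, and let F be a fixed forest on vertex set Υ having exactly r edges. Then the number of labelled trees T on vertex set B whose induced subgraph on Υ equals F is at most 2^r · (k−ℓ)^{k−r−2} · (ℓ+1)^{k−ℓ−1}. -/

import Mathlib

namespace TreeAux

open SimpleGraph

variable {V : Type*} {G : SimpleGraph V}

noncomputable def pth (hG : G.IsTree) (u v : V) : G.Walk u v :=
  (hG.existsUnique_path u v).exists.choose

lemma pth_isPath (hG : G.IsTree) (u v : V) : (pth hG u v).IsPath :=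
  (hG.existsUnique_path u v).exists.choose_spec

lemma pth_unique (hG : G.IsTree) {u v : V} (q : G.Walk u v) (hq : q.IsPath) :
    q = pth hG u v :=
  (hG.existsUnique_path u v).unique hq (pth_isPath hG u v)

open Classical in
/-- parent function toward root `b₀`. -/
noncomputable def par (hG : G.IsTree) (b₀ : V) (v : V) : V :=
  if _ : v = b₀ then b₀ else (pth hG v b₀).getVert 1

variable (hG : G.IsTree) (b₀ : V)

lemma par_root : par hG b₀ b₀ = b₀ := by simp [par]

lemma pth_cons {v : V} (hv : v ≠ b₀) :
    ∃ h : G.Adj v (par hG b₀ v),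
      pth hG v b₀ = SimpleGraph.Walk.cons h (pth hG (par hG b₀ v) b₀) := by
  obtain ⟨x, h, q, hq⟩ := SimpleGraph.Walk.exists_eq_cons_of_ne hv (pth hG v b₀)
  have hp : (pth hG v b₀).IsPath := pth_isPath hG v b₀
  have hq' : q.IsPath := by
    rw [hq] at hp; exact hp.of_cons
  have hx : par hG b₀ v = x := by
    simp only [par, dif_neg hv, hq, SimpleGraph.Walk.getVert_cons_succ,
      SimpleGraph.Walk.getVert_zero]
  subst hx
  refine ⟨h, ?_⟩
  rw [hq, pth_unique hG q hq']

lemma par_adj {v : V} (hv : v ≠ b₀) : G.Adj v (par hG b₀ v) :=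
  (pth_cons hG b₀ hv).choose

lemma par_length {v : V} (hv : v ≠ b₀) :
    (pth hG v b₀).length = (pth hG (par hG b₀ v) b₀).length + 1 := by
  obtain ⟨h, hq⟩ := pth_cons hG b₀ hv
  rw [hq, SimpleGraph.Walk.length_cons]

lemma par_ne {v : V} (hv : v ≠ b₀) : par hG b₀ v ≠ v := by
  intro h
  have := par_adj hG b₀ hv
  rw [h] at this
  exact G.loopless.irrefl v this

lemma par_no_cycle {u v : V} (hu : u ≠ b₀) (hv : v ≠ b₀)
    (h1 : par hG b₀ u = v) (h2 : par hG b₀ v = u) : False := by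
  have l1 := par_length hG b₀ hu
  have l2 := par_length hG b₀ hv
  rw [h1] at l1; rw [h2] at l2; omega

lemma adj_par {u v : V} (huv : G.Adj u v) :
    par hG b₀ u = v ∨ par hG b₀ v = u := by
  classical
  set q := pth hG v b₀ with hqdef
  by_cases hu : u ∈ q.support
  · right
    have hvb : v ≠ b₀ := by
      rintro rfl
      have : q = SimpleGraph.Walk.nil := (pth_unique hG _ SimpleGraph.Walk.IsPath.nil).symm
      rw [this] at hu
      simp at hu
      exact huv.ne hu
    have hq1 : (q.takeUntil u hu).IsPath := (pth_isPath hG v b₀).takeUntil hu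
    have hw1 : (SimpleGraph.Walk.cons huv.symm SimpleGraph.Walk.nil : G.Walk v u).IsPath := by
      simp [SimpleGraph.Walk.isPath_def, huv.ne']
    have := (hG.existsUnique_path v u).unique hq1 hw1
    have hspec := q.take_spec hu
    rw [this, SimpleGraph.Walk.cons_append, SimpleGraph.Walk.nil_append] at hspec
    show par hG b₀ v = u
    simp only [par, dif_neg hvb, ← hqdef]
    rw [← hspec]
    simp only [SimpleGraph.Walk.getVert_cons_succ, SimpleGraph.Walk.getVert_zero]
  · left
    have hub : u ≠ b₀ := by
      rintro rfl
      exact hu q.end_mem_support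
    have hw : (SimpleGraph.Walk.cons huv q).IsPath := (pth_isPath hG v b₀).cons hu
    have := pth_unique hG _ hw
    simp only [par, dif_neg hub, ← this, SimpleGraph.Walk.getVert_cons_succ,
      SimpleGraph.Walk.getVert_zero]

lemma adj_iff_par {u v : V} :
    G.Adj u v ↔ (u ≠ b₀ ∧ par hG b₀ u = v) ∨ (v ≠ b₀ ∧ par hG b₀ v = u) := by
  constructor
  · intro huv
    rcases adj_par hG b₀ huv with h | h
    · left
      refine ⟨?_, h⟩
      rintro rfl
      rw [par_root] at h
      exact huv.ne h
    · right
      refine ⟨?_, h⟩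
      rintro rfl
      rw [par_root] at h
      exact huv.ne' h
  · rintro (⟨h, rfl⟩ | ⟨h, rfl⟩)
    · exact par_adj hG b₀ h
    · exact (par_adj hG b₀ h).symm

/-- smaller endpoint of an unordered pair -/
def smin {α : Type*} [LinearOrder α] (e : Sym2 α) : α :=
  Sym2.lift ⟨fun a b => min a b, fun a b => min_comm a b⟩ e

/-- larger endpoint of an unordered pair -/
def smax {α : Type*} [LinearOrder α] (e : Sym2 α) : α :=
  Sym2.lift ⟨fun a b => max a b, fun a b => max_comm a b⟩ e

lemma smin_smax {α : Type*} [LinearOrder α] (e : Sym2 α) : s(smin e, smax e) = e := by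
  induction e using Sym2.ind with
  | _ a b =>
    simp only [smin, smax, Sym2.lift_mk]
    rcases le_total a b with h | h
    · rw [min_eq_left h, max_eq_right h]
    · rw [min_eq_right h, max_eq_left h, Sym2.eq_swap]

lemma orderIsoOfFin_congr {α : Type*} [LinearOrder α] {s t : Finset α} (h : s = t)
    {n : ℕ} (hs : s.card = n) (ht : t.card = n) (i : Fin n) :
    (↑(s.orderIsoOfFin hs i) : α) = ↑(t.orderIsoOfFin ht i) := by
  subst h; rfl

lemma numaux (t m : ℕ) (ht : 1 ≤ t) (hm : 2 ≤ m) :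
    t * (t + m - 1) ^ (t - 1) ≤ (t * (m + 1)) ^ (t - 1) := by
  rcases Nat.lt_or_ge t 2 with h2 | h2
  · interval_cases t
    · simp
  · obtain ⟨a, rfl⟩ : ∃ a, t = a + 2 := ⟨t - 2, by omega⟩
    obtain ⟨b, rfl⟩ : ∃ b, m = b + 2 := ⟨m - 2, by omega⟩
    have e1 : a + 2 + (b + 2) - 1 = a + b + 3 := by omega
    have e2 : a + 2 - 1 = a + 1 := by omega
    rw [e1, e2]
    calc (a + 2) * (a + b + 3) ^ (a + 1)
        ≤ 2 ^ (a + 1) * (a + b + 3) ^ (a + 1) := by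
          have : a + 2 ≤ 2 ^ (a + 1) := Nat.succ_le_of_lt Nat.lt_two_pow_self
          exact Nat.mul_le_mul_right _ this
      _ = (2 * (a + b + 3)) ^ (a + 1) := by rw [Nat.mul_pow]
      _ ≤ ((a + 2) * (b + 3)) ^ (a + 1) := by
          apply Nat.pow_le_pow_left
          nlinarith

end TreeAux

theorem tree_extension_count_small_r {B : Type*} [Fintype B] (k ℓ r : ℕ)
    (hB : Fintype.card B = k) (Υ : Finset B) (hΥ : Υ.card = ℓ)
    (hℓ2 : 2 ≤ ℓ) (hℓk : ℓ < k)
    (hr : 2 * r < ℓ)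
    (F : SimpleGraph (↑Υ : Set B)) (hF : F.IsAcyclic) (hFr : F.edgeSet.ncard = r) :
    (Nat.card {T : SimpleGraph B // T.IsTree ∧ T.induce (↑Υ : Set B) = F} : ℝ) ≤
      (2 : ℝ) ^ r * ((k : ℝ) - (ℓ : ℝ)) ^ (k - r - 2) * ((ℓ : ℝ) + 1) ^ (k - ℓ - 1) := by
  classical
  letI : LinearOrder B := LinearOrder.lift' (Fintype.equivFin B) (Fintype.equivFin B).injective
  have hkl : ℓ ≤ k := hℓk.le
  set S := {T : SimpleGraph B // T.IsTree ∧ T.induce (↑Υ : Set B) = F} with hSdef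
  obtain ⟨b₀, hb₀c⟩ : ∃ b, b ∈ (Υᶜ : Finset B) := by
    have : (Υᶜ : Finset B).Nonempty := by
      rw [← Finset.card_pos, Finset.card_compl, hΥ, hB]; omega
    exact this
  have hb₀ : b₀ ∉ Υ := Finset.mem_compl.mp hb₀c
  have hEcard : Nat.card ↥F.edgeSet = r := by rw [Nat.card_coe_set_eq, hFr]
  set A' : Finset B := (Υᶜ : Finset B).erase b₀ with hA'
  have hA'card : A'.card = k - ℓ - 1 := by
    rw [hA', Finset.card_erase_of_mem hb₀c, Finset.card_compl, hΥ, hB]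
  -- the parent map of each tree in S
  let P : S → B → B := fun x => TreeAux.par x.2.1 b₀
  -- adjacency transfer
  have adjF : ∀ (x : S) (u w : (↑Υ : Set B)), F.Adj u w ↔ (x : SimpleGraph B).Adj ↑u ↑w := by
    intro x u w
    conv_lhs => rw [← x.2.2]
    rfl
  have hmem : ∀ v : B, v ∈ Υ → v ∈ (↑Υ : Set B) := fun v hv => Finset.mem_coe.mpr hv
  have hneb₀ : ∀ v : B, v ∈ Υ → v ≠ b₀ := by
    intro v hv h; exact hb₀ (h ▸ hv)
  -- the set of "top" vertices has cardinality ℓ - r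
  have card_W : ∀ x : S, (Υ.filter fun v => P x v ∉ Υ).card = ℓ - r := by
    intro x
    have hsplit : (Υ.filter fun v => P x v ∈ Υ).card
        + (Υ.filter fun v => ¬ P x v ∈ Υ).card = Υ.card :=
      Finset.card_filter_add_card_filter_not _
    have hI : (Υ.filter fun v => P x v ∈ Υ).card = r := by
      have hfin : Nat.card {v // v ∈ Υ.filter fun v => P x v ∈ Υ}
          = (Υ.filter fun v => P x v ∈ Υ).card := Nat.card_eq_finsetCard _
      let f : {v // v ∈ Υ.filter fun v => P x v ∈ Υ} → ↥F.edgeSet := fun v =>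
        ⟨s(⟨(v : B), hmem _ (Finset.mem_filter.mp v.2).1⟩,
           ⟨P x v, hmem _ (Finset.mem_filter.mp v.2).2⟩),
         (SimpleGraph.mem_edgeSet _).mpr ((adjF x _ _).mpr
           (TreeAux.par_adj x.2.1 b₀ (hneb₀ _ (Finset.mem_filter.mp v.2).1)))⟩
      have hbij : Function.Bijective f := by
        constructor
        · rintro ⟨v, hv⟩ ⟨u, hu⟩ h
          obtain ⟨hv1, hv2⟩ := Finset.mem_filter.mp hv
          obtain ⟨hu1, hu2⟩ := Finset.mem_filter.mp hu
          have h' := Subtype.ext_iff.mp h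
          simp only [f, Sym2.eq_iff, Subtype.mk.injEq] at h'
          rcases h' with ⟨h1, _⟩ | ⟨h1, h2⟩
          · exact Subtype.ext h1
          · exact (TreeAux.par_no_cycle x.2.1 b₀ (hneb₀ u hu1) (hneb₀ v hv1)
              h1.symm h2).elim
        · rintro ⟨e, he⟩
          revert he
          induction e using Sym2.ind with
          | _ u w =>
            intro he
            have hadj : F.Adj u w := (SimpleGraph.mem_edgeSet _).mp he
            have hTadj : (x : SimpleGraph B).Adj ↑u ↑w := (adjF x _ _).mp hadj
            have hu' : (u : B) ∈ Υ := Finset.mem_coe.mp u.2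
            have hw' : (w : B) ∈ Υ := Finset.mem_coe.mp w.2
            rcases TreeAux.adj_par x.2.1 b₀ hTadj with h | h
            · refine ⟨⟨↑u, Finset.mem_filter.mpr ⟨hu', by show TreeAux.par x.2.1 b₀ ↑u ∈ Υ; rw [h]; exact hw'⟩⟩, ?_⟩
              apply Subtype.ext
              show s(_, _) = s(u, w)
              rw [Sym2.eq_iff]
              left
              exact ⟨Subtype.ext rfl, Subtype.ext h⟩
            · refine ⟨⟨↑w, Finset.mem_filter.mpr ⟨hw', by show TreeAux.par x.2.1 b₀ ↑w ∈ Υ; rw [h]; exact hu'⟩⟩, ?_⟩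
              apply Subtype.ext
              show s(_, _) = s(u, w)
              rw [Sym2.eq_iff]
              right
              exact ⟨Subtype.ext rfl, Subtype.ext h⟩
      rw [← hfin, Nat.card_congr (Equiv.ofBijective f hbij), hEcard]
    have hcard : Υ.card = ℓ := hΥ
    omega
  -- enumeration of A'
  let enumA : Fin (k - ℓ - 1) → B := fun i => (A'.orderIsoOfFin hA'card i : B)
  have henumA : ∀ i, enumA i ∈ A' := fun i => (A'.orderIsoOfFin hA'card i).2
  -- the code
  let Code := (↥F.edgeSet → Bool) × (Fin (ℓ - r) → {b : B // b ∈ (Υᶜ : Finset B)}) ×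
      ((i : Fin (k - ℓ - 1)) → {b : B // b ≠ enumA i})
  let Φ : S → Code := fun x =>
    ⟨fun e => decide (P x ↑(TreeAux.smin e.1) = ↑(TreeAux.smax e.1)),
     fun i => ⟨P x ↑((Υ.filter fun v => P x v ∉ Υ).orderIsoOfFin (card_W x) i), by
        have hmem' := ((Υ.filter fun v => P x v ∉ Υ).orderIsoOfFin (card_W x) i).2
        rw [Finset.mem_filter] at hmem'
        exact Finset.mem_compl.mpr hmem'.2⟩,
     fun i => ⟨P x (enumA i), by
        have h1 : enumA i ≠ b₀ := Finset.ne_of_mem_erase (henumA i)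
        exact TreeAux.par_ne x.2.1 b₀ h1⟩⟩
  have hPb₀ : ∀ x : S, P x b₀ = b₀ := fun x => TreeAux.par_root x.2.1 b₀
  have stepA : ∀ z w : S, Φ z = Φ w → ∀ v (hv : v ∈ Υ) (hp : P z v ∈ Υ), P w v = P z v := by
    intro z w hzw v hv hp
    have hvb : v ≠ b₀ := hneb₀ v hv
    have hpb : P z v ≠ b₀ := hneb₀ _ hp
    have hadjT : (z : SimpleGraph B).Adj v (P z v) := TreeAux.par_adj z.2.1 b₀ hvb
    have hFadj : F.Adj ⟨v, hmem v hv⟩ ⟨P z v, hmem _ hp⟩ := (adjF z _ _).mpr hadjT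
    have hene : s((⟨v, hmem v hv⟩ : (↑Υ : Set B)), (⟨P z v, hmem _ hp⟩ : (↑Υ : Set B)))
        ∈ F.edgeSet := (SimpleGraph.mem_edgeSet _).mpr hFadj
    set e : ↥F.edgeSet := ⟨s(⟨v, hmem v hv⟩, ⟨P z v, hmem _ hp⟩), hene⟩ with hedef
    have h1 : (Φ z).1 e = (Φ w).1 e := by rw [hzw]
    have h1' : decide (P z ↑(TreeAux.smin e.1) = ↑(TreeAux.smax e.1))
        = decide (P w ↑(TreeAux.smin e.1) = ↑(TreeAux.smax e.1)) := h1
    have hiff := decide_eq_decide.mp h1'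
    have hT'adj : (w : SimpleGraph B).Adj v (P z v) := (adjF w _ _).mp hFadj
    have hor := TreeAux.adj_par w.2.1 b₀ hT'adj
    have hmm : s(TreeAux.smin e.1, TreeAux.smax e.1)
        = s((⟨v, hmem v hv⟩ : (↑Υ : Set B)), ⟨P z v, hmem _ hp⟩) := TreeAux.smin_smax e.1
    rcases Sym2.eq_iff.mp hmm with ⟨ha, hb⟩ | ⟨ha, hb⟩
    · rw [ha, hb] at hiff
      exact hiff.mp rfl
    · rw [ha, hb] at hiff
      have hno : ¬ (P z (P z v) = v) := fun hc =>
        TreeAux.par_no_cycle z.2.1 b₀ hvb hpb rfl hc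
      rcases hor with h | h
      · exact h
      · exact (hno (hiff.mpr h)).elim
  have hWeq : ∀ z w : S, Φ z = Φ w →
      (Υ.filter fun v => P z v ∉ Υ) = (Υ.filter fun v => P w v ∉ Υ) := by
    intro z w hzw
    ext v
    simp only [Finset.mem_filter]
    constructor
    · rintro ⟨hv, hp⟩
      refine ⟨hv, fun hc => hp ?_⟩
      have h := stepA w z hzw.symm v hv hc
      rw [h]; exact hc
    · rintro ⟨hv, hp⟩
      refine ⟨hv, fun hc => hp ?_⟩
      have h := stepA z w hzw v hv hc
      rw [h]; exact hc
  have hinj : Function.Injective Φ := by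
    intro x y hxy
    have hP : ∀ v, P x v = P y v := by
      intro v
      by_cases hvb : v = b₀
      · rw [hvb, hPb₀, hPb₀]
      · by_cases hv : v ∈ Υ
        · by_cases hp : P x v ∈ Υ
          · exact (stepA x y hxy v hv hp).symm
          · -- v is a top vertex
            have hWeq' := hWeq x y hxy
            have hvW : v ∈ (Υ.filter fun u => P x u ∉ Υ) := Finset.mem_filter.mpr ⟨hv, hp⟩
            set i := ((Υ.filter fun u => P x u ∉ Υ).orderIsoOfFin (card_W x)).symm ⟨v, hvW⟩
              with hidef
            have h2 : (Φ x).2.1 i = (Φ y).2.1 i := by rw [hxy]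
            have h2' : P x ↑((Υ.filter fun u => P x u ∉ Υ).orderIsoOfFin (card_W x) i)
                = P y ↑((Υ.filter fun u => P y u ∉ Υ).orderIsoOfFin (card_W y) i) :=
              congrArg Subtype.val h2
            have hcoord : (↑((Υ.filter fun u => P x u ∉ Υ).orderIsoOfFin (card_W x) i) : B)
                = ↑((Υ.filter fun u => P y u ∉ Υ).orderIsoOfFin (card_W y) i) :=
              TreeAux.orderIsoOfFin_congr hWeq' _ _ i
            have happ : (↑((Υ.filter fun u => P x u ∉ Υ).orderIsoOfFin (card_W x) i) : B)
                = v := by rw [hidef, OrderIso.apply_symm_apply]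
            rw [happ] at h2' hcoord
            rw [← hcoord] at h2'
            exact h2'
        · have hvA : v ∈ A' := Finset.mem_erase.mpr ⟨hvb, Finset.mem_compl.mpr hv⟩
          set i := (A'.orderIsoOfFin hA'card).symm ⟨v, hvA⟩ with hidef
          have h3 : (Φ x).2.2 i = (Φ y).2.2 i := by rw [hxy]
          have h3' : P x (enumA i) = P y (enumA i) := congrArg Subtype.val h3
          have henum : enumA i = v := by
            show (↑(A'.orderIsoOfFin hA'card i) : B) = v
            rw [hidef, OrderIso.apply_symm_apply]
          rwa [henum] at h3'
    have hTeq : (x : SimpleGraph B) = (y : SimpleGraph B) := by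
      ext u v
      rw [TreeAux.adj_iff_par x.2.1 b₀, TreeAux.adj_iff_par y.2.1 b₀]
      have hu' : TreeAux.par x.2.1 b₀ u = TreeAux.par y.2.1 b₀ u := hP u
      have hv' : TreeAux.par x.2.1 b₀ v = TreeAux.par y.2.1 b₀ v := hP v
      rw [hu', hv']
    exact Subtype.ext hTeq
  -- cardinality computation
  have hsub : ∀ c : B, Nat.card {b : B // b ≠ c} = k - 1 := by
    intro c
    have e : {b : B // b ≠ c} ≃ {b : B // b ∈ ({c}ᶜ : Finset B)} :=
      Equiv.subtypeEquivRight (by intro b; simp)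
    rw [Nat.card_congr e, Nat.card_eq_finsetCard, Finset.card_compl,
      Finset.card_singleton, hB]
  have hcode : Nat.card Code = 2 ^ r * (k - ℓ) ^ (ℓ - r) * (k - 1) ^ (k - ℓ - 1) := by
    show Nat.card (_ × _ × _) = _
    rw [Nat.card_prod, Nat.card_prod, Nat.card_fun, Nat.card_fun, Nat.card_pi]
    have c1 : Nat.card Bool = 2 := by simp [Nat.card_eq_fintype_card]
    have c2 : Nat.card (Fin (ℓ - r)) = ℓ - r := by simp [Nat.card_eq_fintype_card]
    have c3 : Nat.card {b : B // b ∈ (Υᶜ : Finset B)} = k - ℓ := by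
      rw [Nat.card_eq_finsetCard, Finset.card_compl, hΥ, hB]
    have c4 : ∏ i : Fin (k - ℓ - 1), Nat.card {b : B // b ≠ enumA i} = (k - 1) ^ (k - ℓ - 1) := by
      rw [Finset.prod_congr rfl (fun i _ => hsub (enumA i)), Finset.prod_const,
        Finset.card_univ, Fintype.card_fin]
    rw [c1, c2, c3, c4, hEcard]; ring
  have hcard : Nat.card S ≤ 2 ^ r * (k - ℓ) ^ (ℓ - r) * (k - 1) ^ (k - ℓ - 1) := by
    rw [← hcode]
    have : Finite Code := by
      infer_instance
    exact Nat.card_le_card_of_injective Φ hinj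
  -- numeric comparison
  have hnum : 2 ^ r * (k - ℓ) ^ (ℓ - r) * (k - 1) ^ (k - ℓ - 1) ≤
      2 ^ r * (k - ℓ) ^ (k - r - 2) * (ℓ + 1) ^ (k - ℓ - 1) := by
    obtain ⟨a, d, h2, h3, h4⟩ : ∃ a d, ℓ - r = a + 1 ∧ k - r - 2 = a + d ∧ k - ℓ - 1 = d :=
      ⟨ℓ - r - 1, k - ℓ - 1, by omega, by omega, rfl⟩
    rw [h2, h3, h4]
    have key : (k - ℓ) * (k - 1) ^ d ≤ ((k - ℓ) * (ℓ + 1)) ^ d := by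
      have h1 : 1 ≤ k - ℓ := by omega
      have h2' : (k - ℓ) + ℓ - 1 = k - 1 := by omega
      have := TreeAux.numaux (k - ℓ) ℓ h1 hℓ2
      rwa [h2', h4] at this
    calc 2 ^ r * (k - ℓ) ^ (a + 1) * (k - 1) ^ d
        = 2 ^ r * (k - ℓ) ^ a * ((k - ℓ) * (k - 1) ^ d) := by rw [pow_succ]; ring
      _ ≤ 2 ^ r * (k - ℓ) ^ a * ((k - ℓ) * (ℓ + 1)) ^ d := Nat.mul_le_mul_left _ key
      _ = 2 ^ r * (k - ℓ) ^ (a + d) * (ℓ + 1) ^ d := by rw [pow_add, Nat.mul_pow]; ring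
  calc ((Nat.card S : ℕ) : ℝ)
      ≤ ((2 ^ r * (k - ℓ) ^ (k - r - 2) * (ℓ + 1) ^ (k - ℓ - 1) : ℕ) : ℝ) := by
        exact_mod_cast le_trans hcard hnum
    _ = (2 : ℝ) ^ r * ((k : ℝ) - (ℓ : ℝ)) ^ (k - r - 2) * ((ℓ : ℝ) + 1) ^ (k - ℓ - 1) := by
        push_cast [Nat.cast_sub hkl]
        ring
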